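/- With the notation of the previous statement, suppose β(X,Y) = Cα(X,Y) - ⟨X,Y⟩δ for a skew-symmetric linear map C : N → N and a vector δ ∈ N, and suppose Hess(X,Y) = ⟨α(X,Y),δ⟩ for all X,Y. Then the bilinear form θ(X,Y) = (α+β, ⟨·,·⟩+Hess, α-β, ⟨·,·⟩-Hess)(X,Y) is null, i.e., ⟨⟨θ(X,Y),θ(Z,W)⟩⟩ = 0 for all X,Y,Z,W ∈ V. -/
import Mathlib


open scoped InnerProductSpace

noncomputable section

/-- The indefinite inner product of signature `(dim N + 1, dim N + 1)` on `N ⊕ ℝ ⊕ N ⊕ ℝ`. -/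
def indefInner {N : Type*} [NormedAddCommGroup N] [InnerProductSpace ℝ N]
    (a b : N × ℝ × N × ℝ) : ℝ :=
  ⟪a.1, b.1⟫_ℝ + a.2.1 * b.2.1 - ⟪a.2.2.1, b.2.2.1⟫_ℝ - a.2.2.2 * b.2.2.2

/-- The bilinear form `θ = (α+β, ⟨,⟩+Hess, α-β, ⟨,⟩-Hess)`. -/
def theta {V N : Type*} [NormedAddCommGroup V] [InnerProductSpace ℝ V]
    [NormedAddCommGroup N] [InnerProductSpace ℝ N]
    (α β : V → V → N) (Hess : V → V → ℝ) (X Y : V) : N × ℝ × N × ℝ :=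
  (α X Y + β X Y, ⟪X, Y⟫_ℝ + Hess X Y, α X Y - β X Y, ⟪X, Y⟫_ℝ - Hess X Y)

/-- If `β = Cα - ⟨,⟩δ` with `C` skew-symmetric and `Hess = ⟨α(·,·),δ⟩`, then `θ` is null. -/
theorem stmt_7 {V N : Type*} [NormedAddCommGroup V] [InnerProductSpace ℝ V]
    [NormedAddCommGroup N] [InnerProductSpace ℝ N]
    (α : V →ₗ[ℝ] V →ₗ[ℝ] N) (hα : ∀ X Y : V, α X Y = α Y X)
    (C : N →ₗ[ℝ] N) (hC : ∀ ξ η : N, ⟪C ξ, η⟫_ℝ = - ⟪ξ, C η⟫_ℝ) (δ : N)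
    (β : V → V → N) (hβ : ∀ X Y : V, β X Y = C (α X Y) - ⟪X, Y⟫_ℝ • δ)
    (Hess : V → V → ℝ) (hHess : ∀ X Y : V, Hess X Y = ⟪α X Y, δ⟫_ℝ) :
    ∀ X Y Z W : V,
      indefInner (theta (fun a b => α a b) β Hess X Y)
        (theta (fun a b => α a b) β Hess Z W) = 0 := by
  intro X Y Z W
  have hc := hC (α X Y) (α Z W)
  have h1 : ⟪δ, α Z W⟫_ℝ = ⟪α Z W, δ⟫_ℝ := real_inner_comm _ _
  have h2 : ⟪α X Y, δ⟫_ℝ = ⟪δ, α X Y⟫_ℝ := real_inner_comm _ _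
  simp only [indefInner, theta, hβ, hHess, inner_add_left, inner_add_right,
    inner_sub_left, inner_sub_right, inner_smul_left, inner_smul_right,
    RCLike.ofReal_real_eq_id, id_eq, conj_trivial]
  linear_combination 2 * hc - 2 * ⟪X, Y⟫_ℝ * h1

end
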